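/- arXiv:1609.08867 — 4 statements merged into one kernel-verified Lean document; each statement's English description precedes it below -/
import Mathlib

section
/- Let H : ℝ → ℝ be continuous and coercive, and let p, q ∈ ℝ. (1) If (p⁻, p) ∩ (q⁻, q) ≠ ∅, then H(p) ≤ H(q) if and only if [p⁻, p] ⊆ [q⁻, q] (equivalently q⁻ ≤ p⁻ < p ≤ q). (2) If (p, p⁺) ∩ (q, q⁺) ≠ ∅, then H(p) ≤ H(q) if and only if [q, q⁺] ⊆ [p, p⁺] (equivalently p ≤ q < q⁺ ≤ p⁺). (3) If (p⁻, p) ∩ (q, q⁺) ≠ ∅, then H(p) > H(q). -/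
open Set Filter Topology

/-- `p⁻ = sup {q < p : H(q) ≥ H(p)}`. -/
noncomputable def pminus (H : ℝ → ℝ) (p : ℝ) : ℝ :=
  sSup {q : ℝ | q < p ∧ H p ≤ H q}

/-- `p⁺ = inf {q > p : H(q) ≤ H(p)}`, with `inf ∅ = +∞` (extended reals). -/
noncomputable def pplus (H : ℝ → ℝ) (p : ℝ) : EReal :=
  sInf (Real.toEReal '' {q : ℝ | p < q ∧ H q ≤ H p})

/-- `H(p) → +∞` as `|p| → +∞`. -/
def Coercive (H : ℝ → ℝ) : Prop :=
  Tendsto H atTop atTop ∧ Tendsto H atBot atTop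

/-- `F(p) → +∞` as `p → -∞`. -/
def SemiCoercive (F : ℝ → ℝ) : Prop := Tendsto F atBot atTop

/-- the open interval `(a⁻, a⁺)` (upper endpoint possibly `+∞`). -/
def ooMM (H : ℝ → ℝ) (a : ℝ) : Set ℝ :=
  {r : ℝ | pminus H a < r ∧ (r : EReal) < pplus H a}

/-- the open interval `(p, p⁺)` (upper endpoint possibly `+∞`). -/
def ooUp (H : ℝ → ℝ) (p : ℝ) : Set ℝ :=
  {r : ℝ | p < r ∧ (r : EReal) < pplus H p}

/-- the closed interval `[a⁻, a⁺]` (upper endpoint possibly `+∞`). -/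
def ccMM (H : ℝ → ℝ) (a : ℝ) : Set ℝ :=
  {r : ℝ | pminus H a ≤ r ∧ (r : EReal) ≤ pplus H a}

/-- `A` is a set limiter for `H`. -/
def IsSetLimiter (H : ℝ → ℝ) (A : Set ℝ) : Prop :=
  (∀ a ∈ A, (pminus H a : EReal) ≠ pplus H a) ∧
  (∀ a ∈ A, ∀ b ∈ A, a < b → H b ≤ H a) ∧
  (∀ p : ℝ, pminus H p < p → ∃ a ∈ A, (Ioo (pminus H p) p ∩ ooMM H a).Nonempty) ∧
  (∀ p : ℝ, (p : EReal) < pplus H p → ∃ a ∈ A, (ooUp H p ∩ ooMM H a).Nonempty)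

open Classical in
/-- The `A`-limited flux function `F_A`: equal to `H(a)` on `[a⁻, a⁺]` for `a ∈ A`,
and to `H` elsewhere. -/
noncomputable def limFlux (H : ℝ → ℝ) (A : Set ℝ) (p : ℝ) : ℝ :=
  if h : ∃ a, a ∈ A ∧ p ∈ ccMM H a then H h.choose else H p

/-- Condition (S) in the definition of `A_F`. -/
def CondS (H F : ℝ → ℝ) (p : ℝ) : Prop :=
  pminus H p ≠ p ∧ H p ≤ F p ∧
    ∀ q : ℝ, H q ≤ F q → (ooMM H q ∩ Ioo (pminus H p) p).Nonempty → H q ≤ H p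

/-- Condition (T) in the definition of `A_F`. -/
def CondT (H F : ℝ → ℝ) (p : ℝ) : Prop :=
  (p : EReal) ≠ pplus H p ∧ F p ≤ H p ∧
    ∀ q : ℝ, F q ≤ H q → (ooMM H q ∩ ooUp H p).Nonempty → H p ≤ H q

/-- The set `A_F` associated with a boundary function `F`. -/
def limiterOf (H F : ℝ → ℝ) : Set ℝ := {p : ℝ | CondS H F p ∨ CondT H F p}

section Aux

variable {H : ℝ → ℝ}

lemma bddAbove_pminusSet (p : ℝ) : BddAbove {q : ℝ | q < p ∧ H p ≤ H q} :=
  ⟨p, fun _ hq => hq.1.le⟩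

lemma nonempty_pminusSet (hcoer : Coercive H) (p : ℝ) :
    {q : ℝ | q < p ∧ H p ≤ H q}.Nonempty := by
  obtain ⟨q, hq1, hq2⟩ := ((eventually_lt_atBot p).and
    (hcoer.2.eventually_ge_atTop (H p))).exists
  exact ⟨q, hq1, hq2⟩

lemma lt_of_mem_Ioo_pminus {p r : ℝ} (h1 : pminus H p < r) (h2 : r < p) :
    H r < H p := by
  by_contra h
  push_neg at h
  exact absurd (le_csSup (bddAbove_pminusSet p) ⟨h2, h⟩) (not_le.mpr h1)

lemma le_H_pminus (hH : Continuous H) (hcoer : Coercive H) (p : ℝ) :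
    H p ≤ H (pminus H p) := by
  have hne := nonempty_pminusSet hcoer p
  have hlub : IsLUB {q : ℝ | q < p ∧ H p ≤ H q} (pminus H p) :=
    isLUB_csSup hne (bddAbove_pminusSet p)
  have hcl : pminus H p ∈ closure {q : ℝ | q < p ∧ H p ≤ H q} := hlub.mem_closure hne
  exact (closure_minimal (fun x hx => hx.2)
    (isClosed_le continuous_const hH)) hcl

lemma lt_of_mem_ooUp {p r : ℝ} (h1 : p < r) (h2 : (r : EReal) < pplus H p) :
    H p < H r := by
  by_contra h
  push_neg at h
  exact absurd (sInf_le ⟨r, ⟨h1, h⟩, rfl⟩ : pplus H p ≤ (r : EReal)) (not_le.mpr h2)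

lemma H_pplus_le (hH : Continuous H) {p x : ℝ} (hx : pplus H p = (x : EReal)) :
    H x ≤ H p := by
  set T := {q : ℝ | p < q ∧ H q ≤ H p} with hT
  have hTne : T.Nonempty := by
    by_contra h
    rw [not_nonempty_iff_eq_empty] at h
    rw [pplus, ← hT, h] at hx
    simp at hx
  have hglb : IsGLB T x := by
    constructor
    · intro t ht
      have h1 : pplus H p ≤ (t : EReal) := sInf_le ⟨t, ht, rfl⟩
      rw [hx] at h1
      exact_mod_cast h1
    · intro y hy
      by_contra h
      push_neg at h
      have h1 : sInf (Real.toEReal '' T) < (y : EReal) := by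
        rw [← pplus, hx]; exact_mod_cast h
      obtain ⟨a, ⟨t, ht, rfl⟩, hlt⟩ := sInf_lt_iff.mp h1
      exact absurd (hy ht) (not_le.mpr (by exact_mod_cast hlt))
  have hcl : x ∈ closure T := hglb.mem_closure hTne
  exact (closure_minimal (fun q hq => hq.2)
    (isClosed_le hH continuous_const)) hcl

end Aux

theorem stmt1 (H : ℝ → ℝ) (hH : Continuous H) (hcoer : Coercive H) (p q : ℝ) :
    ((Ioo (pminus H p) p ∩ Ioo (pminus H q) q).Nonempty →
      (H p ≤ H q ↔ Icc (pminus H p) p ⊆ Icc (pminus H q) q)) ∧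
    ((ooUp H p ∩ ooUp H q).Nonempty →
      (H p ≤ H q ↔
        {r : ℝ | q ≤ r ∧ (r : EReal) ≤ pplus H q} ⊆
          {r : ℝ | p ≤ r ∧ (r : EReal) ≤ pplus H p})) ∧
    ((Ioo (pminus H p) p ∩ ooUp H q).Nonempty → H q < H p) := by
  refine ⟨?_, ?_, ?_⟩
  · rintro ⟨r, ⟨hr1, hr2⟩, hr3, hr4⟩
    constructor
    · intro hpq
      have hplq : p ≤ q := by
        by_contra h
        push_neg at h
        exact absurd hpq (not_le.mpr (lt_of_mem_Ioo_pminus (hr1.trans hr4) h))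
      have hqmin : pminus H q ≤ pminus H p := by
        by_contra h
        push_neg at h
        have h1 : H (pminus H q) < H p :=
          lt_of_mem_Ioo_pminus h (hr3.trans hr2)
        exact absurd (le_H_pminus hH hcoer q) (not_le.mpr (h1.trans_le hpq))
      exact Icc_subset_Icc hqmin hplq
    · intro hsub
      have hp : p ∈ Icc (pminus H q) q := hsub ⟨(hr1.trans hr2).le, le_refl p⟩
      rcases eq_or_lt_of_le hp.2 with heq | hlt
      · rw [heq]
      · exact (lt_of_mem_Ioo_pminus (hr3.trans hr2) hlt).le
  · rintro ⟨r, ⟨hr1, hr2⟩, hr3, hr4⟩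
    constructor
    · intro hpq
      have hplq : p ≤ q := by
        by_contra h
        push_neg at h
        have h2 : (p : EReal) < pplus H q :=
          lt_trans (by exact_mod_cast hr1) hr4
        exact absurd hpq (not_le.mpr (lt_of_mem_ooUp h h2))
      have hqc : pplus H q ≤ pplus H p := by
        by_contra h
        push_neg at h
        have hne_top : pplus H p ≠ ⊤ := h.ne_top
        have hne_bot : pplus H p ≠ ⊥ := by
          intro hb
          rw [hb] at hr2
          exact (EReal.bot_lt_coe r).not_gt hr2
        lift pplus H p to ℝ using ⟨hne_top, hne_bot⟩ with x hxx
        have hqx : q < x := by exact_mod_cast hr3.trans_le (by exact_mod_cast hr2.le)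
        have h1 : H q < H x := lt_of_mem_ooUp hqx h
        have h2 : H x ≤ H p := H_pplus_le hH hxx.symm
        exact absurd (h2.trans hpq) (not_le.mpr h1)
      exact fun s hs => ⟨hplq.trans hs.1, hs.2.trans hqc⟩
    · intro hsub
      have hq : q ∈ {r : ℝ | p ≤ r ∧ (r : EReal) ≤ pplus H p} :=
        hsub ⟨le_refl q, (lt_trans (by exact_mod_cast hr3) hr4).le⟩
      rcases eq_or_lt_of_le hq.1 with heq | hlt
      · rw [heq]
      · have h2 : (q : EReal) < pplus H p :=
          lt_trans (by exact_mod_cast hr3) hr2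
        exact (lt_of_mem_ooUp hlt h2).le
  · rintro ⟨r, ⟨hr1, hr2⟩, hr3, hr4⟩
    exact (lt_of_mem_ooUp hr3 hr4).trans (lt_of_mem_Ioo_pminus hr1 hr2)
end

section
/- Let H : ℝ → ℝ be continuous and coercive. If p₁ < p₂ and H(p₁) ≥ H(p₂), then the open intervals (p₁⁻, p₁⁺) and (p₂⁻, p₂⁺) are disjoint. -/
open Set Filter Topology

theorem stmt2 (H : ℝ → ℝ) (hH : Continuous H) (hcoer : Coercive H)
    (p₁ p₂ : ℝ) (hlt : p₁ < p₂) (hge : H p₂ ≤ H p₁) :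
    ooMM H p₁ ∩ ooMM H p₂ = ∅ := by
  ext r
  simp only [Set.mem_inter_iff, Set.mem_empty_iff_false, iff_false]
  rintro ⟨⟨h1l, h1r⟩, ⟨h2l, h2r⟩⟩
  -- r < p₂ since pplus H p₁ ≤ p₂
  have hp2mem : (p₂ : EReal) ∈ Real.toEReal '' {q : ℝ | p₁ < q ∧ H q ≤ H p₁} :=
    ⟨p₂, ⟨hlt, hge⟩, rfl⟩
  have hrp2 : r < p₂ := by
    have := lt_of_lt_of_le h1r (sInf_le hp2mem)
    exact_mod_cast this
  -- p₁ ≤ pminus H p₂ < r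
  have hbdd : BddAbove {q : ℝ | q < p₂ ∧ H p₂ ≤ H q} :=
    ⟨p₂, fun q hq => le_of_lt hq.1⟩
  have hp1r : p₁ < r :=
    lt_of_le_of_lt (le_csSup hbdd ⟨hlt, hge⟩) h2l
  -- H p₁ < H r
  have hHr : H p₁ < H r := by
    by_contra h
    push_neg at h
    have : pplus H p₁ ≤ (r : EReal) := sInf_le ⟨r, ⟨hp1r, h⟩, rfl⟩
    exact absurd h1r (not_lt.mpr this)
  -- then r is in the set defining pminus H p₂
  have : r ≤ pminus H p₂ :=
    le_csSup hbdd ⟨hrp2, le_of_lt (lt_of_le_of_lt hge hHr)⟩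
  exact absurd h2l (not_lt.mpr this)
end

section
/- Let H : ℝ → ℝ be continuous and coercive, and let F : ℝ → ℝ be continuous, non-increasing and semi-coercive. Then for every p ∈ ℝ, min(F(p), H(p)) ≤ F_{A_F}(p) ≤ max(F(p), H(p)), where F_{A_F} is the A_F-limited flux function associated with the set limiter A_F. -/
open Set Filter Topology

section helpers
variable {H : ℝ → ℝ}

private lemma Sne (hbot : Tendsto H atBot atTop) (a : ℝ) :
    {q : ℝ | q < a ∧ H a ≤ H q}.Nonempty := by
  obtain ⟨q, h1, h2⟩ := ((eventually_lt_atBot a).and (hbot.eventually_ge_atTop (H a))).exists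
  exact ⟨q, h1, h2⟩

private lemma pminus_le (hbot : Tendsto H atBot atTop) (a : ℝ) : pminus H a ≤ a :=
  csSup_le (Sne hbot a) fun _ hx => hx.1.le

private lemma H_lt_left (a r : ℝ) (h1 : pminus H a < r) (h2 : r < a) : H r < H a := by
  by_contra h
  exact absurd (le_csSup ⟨a, fun x hx => hx.1.le⟩ (⟨h2, not_lt.1 h⟩ : r ∈ {q : ℝ | q < a ∧ H a ≤ H q}))
    (not_le.2 h1)

private lemma le_pplus (a : ℝ) : (a : EReal) ≤ pplus H a := by
  refine le_sInf ?_
  rintro x ⟨q, ⟨hq, _⟩, rfl⟩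
  exact_mod_cast hq.le

private lemma H_lt_right (a r : ℝ) (h1 : a < r) (h2 : (r : EReal) < pplus H a) : H a < H r := by
  by_contra h
  simp only [pplus] at h2
  have hmem : (r : EReal) ∈ Real.toEReal '' {q : ℝ | a < q ∧ H q ≤ H a} :=
    ⟨r, ⟨h1, not_lt.1 h⟩, rfl⟩
  exact absurd (sInf_le hmem) (not_le.2 h2)

private lemma H_pminus_eq (hH : Continuous H) (hbot : Tendsto H atBot atTop) (a : ℝ)
    (hlt : pminus H a < a) : H (pminus H a) = H a := by
  have hne := Sne hbot a
  have hbd : BddAbove {q : ℝ | q < a ∧ H a ≤ H q} := ⟨a, fun x hx => hx.1.le⟩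
  have hlub : IsLUB {q : ℝ | q < a ∧ H a ≤ H q} (pminus H a) := isLUB_csSup hne hbd
  have h1 : H a ≤ H (pminus H a) := by
    have hcl : pminus H a ∈ closure {q : ℝ | q < a ∧ H a ≤ H q} := hlub.mem_closure hne
    exact closure_minimal (fun x hx => hx.2) (isClosed_le continuous_const hH) hcl
  refine le_antisymm ?_ h1
  by_contra h
  push_neg at h
  have h3 : H ⁻¹' Ioi (H a) ∈ 𝓝[>] (pminus H a) :=
    nhdsWithin_le_nhds (hH.continuousAt (Ioi_mem_nhds h))
  have h2 : Ioo (pminus H a) a ∈ 𝓝[>] (pminus H a) := Ioo_mem_nhdsGT_of_mem ⟨le_refl _, hlt⟩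
  obtain ⟨r, ⟨hr1, hr2⟩, hr3⟩ := Filter.nonempty_of_mem (inter_mem h2 h3)
  exact absurd (le_csSup hbd ⟨hr2, (le_of_lt hr3)⟩) (not_le.2 hr1)

private lemma H_pplus_eq (hH : Continuous H) (a t : ℝ) (h1 : a < t) (h2 : (t : EReal) = pplus H a) :
    H t = H a := by
  simp only [pplus] at h2
  have htc : t ∈ closure {q : ℝ | a < q ∧ H q ≤ H a} := by
    rw [Metric.mem_closure_iff]
    intro ε hε
    have hlt : sInf (Real.toEReal '' {q : ℝ | a < q ∧ H q ≤ H a}) < ((t + ε : ℝ) : EReal) := by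
      rw [← h2]; exact_mod_cast lt_add_of_pos_right t hε
    obtain ⟨x, hx, hxlt⟩ := sInf_lt_iff.1 hlt
    obtain ⟨q, hqS, rfl⟩ := hx
    have hq1 : t ≤ q := by
      have h4 : ((t : EReal)) ≤ (q : EReal) := h2 ▸ sInf_le ⟨q, hqS, rfl⟩
      exact_mod_cast h4
    have hq2 : q < t + ε := by exact_mod_cast hxlt
    refine ⟨q, hqS, ?_⟩
    rw [Real.dist_eq, abs_of_nonpos (by linarith)]
    linarith
  have hle : H t ≤ H a :=
    closure_minimal (fun x hx => hx.2) (isClosed_le hH continuous_const) htc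
  have hge : H a ≤ H t := by
    have htc2 : t ∈ closure (Ioo a t) := by
      rw [closure_Ioo h1.ne]; exact right_mem_Icc.2 h1.le
    refine closure_minimal (fun r hr => ?_) (isClosed_le continuous_const hH) htc2
    exact (H_lt_right a r hr.1 (by exact_mod_cast h2 ▸ (by exact_mod_cast hr.2 : (r:EReal) < (t:EReal)))).le
  exact le_antisymm hle hge

private lemma exists_real_between {a : ℝ} {x : EReal} (h : (a : EReal) < x) :
    ∃ r : ℝ, a < r ∧ (r : EReal) < x := by
  obtain ⟨y, hy1, hy2⟩ := exists_between h
  lift y to ℝ using ⟨(lt_of_lt_of_le hy2 le_top).ne, ((EReal.bot_lt_coe a).trans hy1).ne'⟩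
  exact ⟨y, by exact_mod_cast hy1, hy2⟩

end helpers

private lemma key (H F : ℝ → ℝ) (hH : Continuous H) (hbot : Tendsto H atBot atTop)
    (hFanti : Antitone F) (p a : ℝ)
    (hA : CondS H F a ∨ CondT H F a) (hcc : p ∈ ccMM H a) :
    min (F p) (H p) ≤ H a ∧ H a ≤ max (F p) (H p) := by
  obtain ⟨h1, h2⟩ := hcc
  rcases lt_trichotomy p a with hpa | rfl | hap
  · rcases eq_or_lt_of_le h1 with heq | hlt
    · have hpe : H p = H a := by
        rw [← heq]; exact H_pminus_eq hH hbot a (heq ▸ hpa)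
      exact ⟨(min_le_right _ _).trans hpe.le, hpe.ge.trans (le_max_right _ _)⟩
    · have hHp : H p < H a := H_lt_left a p hlt hpa
      have hmax : H a ≤ F p := by
        rcases hA with ⟨_, hHF, _⟩ | ⟨hne, hFH, hq⟩
        · exact hHF.trans (hFanti hpa.le)
        · -- construction 1
          by_contra hcon
          push_neg at hcon   -- F p < H a
          obtain ⟨x₀, hx₀, hmin⟩ := isCompact_Icc.exists_isMinOn
            ⟨p, left_mem_Icc.2 hpa.le⟩ hH.continuousOn
          set c := max (H x₀) (F p) with hc
          have hHx₀p : H x₀ ≤ H p := hmin (left_mem_Icc.2 hpa.le)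
          have hcHa : c < H a := max_lt (hHx₀p.trans_lt hHp) hcon
          set T := Icc p a ∩ {x | H x ≤ c} with hT
          have hTc : IsCompact T := isCompact_Icc.inter_right (isClosed_le hH continuous_const)
          obtain ⟨q, ⟨⟨hpq, hqa⟩, hqc⟩, hqmax⟩ :=
            hTc.exists_isGreatest ⟨x₀, hx₀, (le_max_left _ _ : H x₀ ≤ c)⟩
          have hqa' : q < a :=
            lt_of_le_of_ne hqa (fun h => absurd (h ▸ hqc) (not_le.2 hcHa))
          have hHq : H q = c := by
            refine le_antisymm hqc ?_
            by_contra h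
            push_neg at h
            have h3 : H ⁻¹' Iio c ∈ 𝓝[>] q :=
              nhdsWithin_le_nhds (hH.continuousAt (Iio_mem_nhds h))
            have h4 : Ioo q a ∈ 𝓝[>] q := Ioo_mem_nhdsGT_of_mem ⟨le_refl _, hqa'⟩
            obtain ⟨r, ⟨hr1, hr2⟩, hr3⟩ := Filter.nonempty_of_mem (inter_mem h4 h3)
            exact absurd (hqmax ⟨⟨hpq.trans hr1.le, hr2.le⟩, (hr3.le : H r ≤ c)⟩) (not_le.2 hr1)
          have hbig : ∀ r : ℝ, q < r → (r : EReal) < pplus H a → ¬ H r ≤ c := by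
            intro r hr1 hr2 hr3
            rcases le_or_gt r a with hra | har
            · exact absurd (hqmax ⟨⟨hpq.trans hr1.le, hra⟩, hr3⟩) (not_le.2 hr1)
            · exact absurd hr3 (not_le.2 (hcHa.trans (H_lt_right a r har hr2)))
          have hmono : pplus H a ≤ pplus H q := by
            have hb : ∀ x ∈ Real.toEReal '' {r : ℝ | q < r ∧ H r ≤ H q}, pplus H a ≤ x := by
              rintro x ⟨r, ⟨hr1, hr2⟩, rfl⟩
              by_contra hcr
              push_neg at hcr
              exact hbig r hr1 hcr (hHq ▸ hr2)
            exact le_sInf hb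
          have hlt2 : (a : EReal) < pplus H a := lt_of_le_of_ne (le_pplus a) hne
          obtain ⟨r₀, hr₀1, hr₀2⟩ := exists_real_between hlt2
          have hFq : F q ≤ H q := by
            rw [hHq]; exact (hFanti hpq).trans (le_max_right _ _)
          have := hq q hFq ⟨r₀,
            ⟨(pminus_le hbot q).trans_lt (hqa'.trans hr₀1), hr₀2.trans_le hmono⟩,
            ⟨hr₀1, hr₀2⟩⟩
          rw [hHq] at this
          exact absurd this (not_le.2 hcHa)
      exact ⟨(min_le_right _ _).trans hHp.le, hmax.trans (le_max_left _ _)⟩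
  · simp
  · rcases eq_or_lt_of_le h2 with heq | hlt
    · have hpe : H p = H a := H_pplus_eq hH a p hap heq
      exact ⟨(min_le_right _ _).trans hpe.le, hpe.ge.trans (le_max_right _ _)⟩
    · have hHp : H a < H p := H_lt_right a p hap hlt
      have hmin : F p ≤ H a := by
        rcases hA with ⟨hne, hHF, hq⟩ | ⟨_, hFH, _⟩
        · -- construction 2
          by_contra hcon
          push_neg at hcon  -- H a < F p
          obtain ⟨x₀, hx₀, hmax'⟩ := isCompact_Icc.exists_isMaxOn
            ⟨p, right_mem_Icc.2 hap.le⟩ hH.continuousOn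
          set c := min (H x₀) (F p) with hc
          have hHx₀p : H p ≤ H x₀ := hmax' (right_mem_Icc.2 hap.le)
          have hcHa : H a < c := lt_min (hHp.trans_le hHx₀p) hcon
          set T := Icc a p ∩ {x | c ≤ H x} with hT
          have hTc : IsCompact T := isCompact_Icc.inter_right (isClosed_le continuous_const hH)
          obtain ⟨q, ⟨⟨haq, hqp⟩, hqc⟩, hqmin⟩ :=
            hTc.exists_isLeast ⟨x₀, hx₀, (min_le_left _ _ : c ≤ H x₀)⟩
          have haq' : a < q :=
            lt_of_le_of_ne haq (fun h => absurd (h ▸ hqc) (not_le.2 hcHa))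
          have hHq : H q = c := by
            refine le_antisymm ?_ hqc
            by_contra h
            push_neg at h
            have h3 : H ⁻¹' Ioi c ∈ 𝓝[<] q :=
              nhdsWithin_le_nhds (hH.continuousAt (Ioi_mem_nhds h))
            have h4 : Ioo a q ∈ 𝓝[<] q := Ioo_mem_nhdsLT_of_mem ⟨haq', le_refl _⟩
            obtain ⟨r, ⟨hr1, hr2⟩, hr3⟩ := Filter.nonempty_of_mem (inter_mem h4 h3)
            exact absurd (hqmin ⟨⟨hr1.le, hr2.le.trans hqp⟩, (le_of_lt hr3 : c ≤ H r)⟩) (not_le.2 hr2)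
          have hpma : pminus H a < a := lt_of_le_of_ne (pminus_le hbot a) hne
          have hsmall : ∀ r : ℝ, r < q → pminus H a < r → ¬ c ≤ H r := by
            intro r hr1 hr2 hr3
            rcases lt_or_ge r a with hra | har
            · exact absurd hr3 (not_le.2 ((H_lt_left a r hr2 hra).trans hcHa))
            · exact absurd (hqmin ⟨⟨har, hr1.le.trans hqp⟩, hr3⟩) (not_le.2 hr1)
          have hmono : pminus H q ≤ pminus H a := by
            refine csSup_le (Sne hbot q) ?_
            intro r hr
            by_contra hcr
            push_neg at hcr
            exact hsmall r hr.1 hcr (hHq ▸ hr.2)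
          obtain ⟨r₀, hr₀1, hr₀2⟩ := exists_between hpma
          have hHFq : H q ≤ F q := by
            rw [hHq]; exact (min_le_right _ _).trans (hFanti hqp)
          have hr₀q : (r₀ : EReal) < pplus H q := by
            refine lt_of_lt_of_le ?_ (le_pplus q)
            exact_mod_cast hr₀2.trans haq'
          have := hq q hHFq ⟨r₀, ⟨hmono.trans_lt hr₀1, hr₀q⟩, ⟨hr₀1, hr₀2⟩⟩
          rw [hHq] at this
          exact absurd this (not_le.2 hcHa)
        · exact (hFanti hap.le).trans hFH
      exact ⟨(min_le_left _ _).trans hmin, hHp.le.trans (le_max_right _ _)⟩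


theorem stmt6 (H F : ℝ → ℝ) (hH : Continuous H) (hcoer : Coercive H)
    (hF : Continuous F) (hFanti : Antitone F) (hFsc : SemiCoercive F) (p : ℝ) :
    min (F p) (H p) ≤ limFlux H (limiterOf H F) p ∧
    limFlux H (limiterOf H F) p ≤ max (F p) (H p) := by
  unfold limFlux
  split
  · next h =>
    obtain ⟨ha, hcc⟩ := h.choose_spec
    exact key H F hH hcoer.2 hFanti p h.choose ha hcc
  · exact ⟨min_le_right _ _, le_max_right _ _⟩
end

section
/- Let H : ℝ → ℝ be continuous and coercive and let A be a set limiter for H. Then the set limiter A_{F_A} associated to the A-limited flux function F_A equals A, i.e. A_{F_A} = A. -/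
open Set Filter Topology

namespace SLaux

variable {H : ℝ → ℝ} {A : Set ℝ}

lemma pmSet_nonempty (hcoer : Coercive H) (p : ℝ) :
    {q : ℝ | q < p ∧ H p ≤ H q}.Nonempty := by
  obtain ⟨q, hq1, hq2⟩ :=
    ((hcoer.2.eventually_ge_atTop (H p)).and (eventually_lt_atBot p)).exists
  exact ⟨q, hq2, hq1⟩

lemma pmSet_bddAbove (H : ℝ → ℝ) (p : ℝ) : BddAbove {q : ℝ | q < p ∧ H p ≤ H q} :=
  ⟨p, fun _ hx => hx.1.le⟩

lemma pm_le (hcoer : Coercive H) (p : ℝ) : pminus H p ≤ p :=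
  csSup_le (pmSet_nonempty hcoer p) (fun _ hx => hx.1.le)

/-- F3 : on `(p⁻, p)`, `H < H p`. -/
lemma H_lt_of_between_pm (hcoer : Coercive H) {p s : ℝ}
    (h1 : pminus H p < s) (h2 : s < p) : H s < H p := by
  by_contra h
  push_neg at h
  exact absurd (le_csSup (pmSet_bddAbove H p) ⟨h2, h⟩) (not_le.2 h1)

/-- F5' : `H(p⁻) ≥ H p`. -/
lemma le_H_pm (hH : Continuous H) (hcoer : Coercive H) (p : ℝ) :
    H p ≤ H (pminus H p) := by
  have h1 : pminus H p ∈ closure {q : ℝ | q < p ∧ H p ≤ H q} :=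
    (isLUB_csSup (pmSet_nonempty hcoer p) (pmSet_bddAbove H p)).mem_closure
      (pmSet_nonempty hcoer p)
  exact closure_minimal (fun x hx => hx.2) (isClosed_le continuous_const hH) h1

/-- F5 : if `p⁻ < p` then `H(p⁻) = H p`. -/
lemma H_pm_eq (hH : Continuous H) (hcoer : Coercive H) {p : ℝ}
    (h : pminus H p < p) : H (pminus H p) = H p := by
  refine le_antisymm ?_ (le_H_pm hH hcoer p)
  have ht : Tendsto H (𝓝[>] (pminus H p)) (𝓝 (H (pminus H p))) :=
    (hH.tendsto _).mono_left nhdsWithin_le_nhds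
  refine le_of_tendsto ht ?_
  filter_upwards [Ioo_mem_nhdsGT_of_mem (⟨le_rfl, h⟩ : pminus H p ∈ Ico (pminus H p) p)]
    with t ht'
  exact (H_lt_of_between_pm hcoer ht'.1 ht'.2).le

/-- F2 : `p ≤ p⁺`. -/
lemma le_pp (H : ℝ → ℝ) (p : ℝ) : (p : EReal) ≤ pplus H p := by
  refine le_sInf ?_
  rintro y ⟨q, ⟨hq1, _⟩, rfl⟩
  exact_mod_cast hq1.le

/-- F4 : on `(p, p⁺)`, `H > H p`. -/
lemma H_lt_of_between_pp {p s : ℝ} (h1 : p < s) (h2 : (s : EReal) < pplus H p) :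
    H p < H s := by
  by_contra h
  push_neg at h
  have h3 : pplus H p ≤ (s : EReal) :=
    sInf_le (mem_image_of_mem Real.toEReal
      (show s ∈ {q : ℝ | p < q ∧ H q ≤ H p} from ⟨h1, h⟩))
  exact absurd h3 (not_le.2 h2)

/-- L1a -/
lemma pp_le_coe {p q : ℝ} (hq : p < q) (h : H q ≤ H p) : pplus H p ≤ (q : EReal) :=
  sInf_le (mem_image_of_mem Real.toEReal
    (show q ∈ {r : ℝ | p < r ∧ H r ≤ H p} from ⟨hq, h⟩))

/-- L1b -/
lemma le_pm_of {p q : ℝ} (hq : p < q) (h : H q ≤ H p) : p ≤ pminus H q :=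
  le_csSup (pmSet_bddAbove H q) ⟨hq, h⟩

lemma pp_real {p : ℝ} (h : pplus H p ≠ ⊤) :
    ∃ c : ℝ, pplus H p = (c : EReal) ∧ p ≤ c := by
  have hb : pplus H p ≠ ⊥ := by
    intro hb
    have := le_pp H p
    rw [hb, le_bot_iff] at this
    exact (EReal.coe_ne_bot p) this
  refine ⟨(pplus H p).toReal, (EReal.coe_toReal h hb).symm, ?_⟩
  have h2 := le_pp H p
  rw [← EReal.coe_toReal h hb] at h2
  exact_mod_cast h2

/-- F6' : if `p⁺ = c` is finite then `H c ≤ H p`. -/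
lemma H_pp_le (hH : Continuous H) {p c : ℝ} (hc : pplus H p = (c : EReal)) :
    H c ≤ H p := by
  have hmem : c ∈ closure {q : ℝ | p < q ∧ H q ≤ H p} := by
    rw [Metric.mem_closure_iff]
    intro ε hε
    have h1 : ¬ ((↑(c + ε) : EReal) ≤ sInf (Real.toEReal '' {q : ℝ | p < q ∧ H q ≤ H p})) := by
      intro hcon
      rw [show sInf (Real.toEReal '' {q : ℝ | p < q ∧ H q ≤ H p}) = pplus H p from rfl,
        hc] at hcon
      have : c + ε ≤ c := by exact_mod_cast hcon
      linarith
    obtain ⟨y, hyT, hy⟩ : ∃ y ∈ Real.toEReal '' {q : ℝ | p < q ∧ H q ≤ H p},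
        y < ↑(c + ε) := by
      by_contra hcon
      push_neg at hcon
      exact h1 (le_sInf hcon)
    obtain ⟨x, hxT, rfl⟩ := hyT
    refine ⟨x, hxT, ?_⟩
    have hxc : c ≤ x := by
      have h3 : (c : EReal) ≤ (x : EReal) := by
        rw [← hc]
        exact sInf_le (mem_image_of_mem _ hxT)
      exact_mod_cast h3
    have hx : x < c + ε := by exact_mod_cast hy
    rw [Real.dist_eq, abs_sub_comm, abs_of_nonneg (by linarith)]
    linarith
  exact closure_minimal (fun x hx => hx.2) (isClosed_le hH continuous_const) hmem

/-- F6 : if `p⁺ = c` is finite and `p < c` then `H c = H p`. -/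
lemma H_pp_eq (hH : Continuous H) {p c : ℝ} (hc : pplus H p = (c : EReal))
    (hpc : p < c) : H c = H p := by
  refine le_antisymm (H_pp_le hH hc) ?_
  have ht : Tendsto H (𝓝[<] c) (𝓝 (H c)) := (hH.tendsto _).mono_left nhdsWithin_le_nhds
  refine ge_of_tendsto ht ?_
  filter_upwards [Ioo_mem_nhdsLT_of_mem (⟨hpc, le_rfl⟩ : c ∈ Ioc p c)] with t ht'
  refine (H_lt_of_between_pp ht'.1 ?_).le
  rw [hc]
  exact_mod_cast ht'.2

lemma mem_ccMM_self (hcoer : Coercive H) (a : ℝ) : a ∈ ccMM H a :=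
  ⟨pm_le hcoer a, le_pp H a⟩

end SLaux


namespace SLaux

variable {H : ℝ → ℝ} {A : Set ℝ}

/-- If `a < b` in `A` and the closed intervals overlap, then `H a ≤ H b`. -/
lemma levels_le (hH : Continuous H) (hcoer : Coercive H) (hA : IsSetLimiter H A)
    {a b x : ℝ} (ha : a ∈ A) (hb : b ∈ A) (hab : a < b)
    (hxa : x ∈ ccMM H a) (hxb : x ∈ ccMM H b) : H a ≤ H b := by
  by_contra hcon
  push_neg at hcon
  have hmono : H b ≤ H a := hA.2.1 a ha b hb hab
  have h1 : a ≤ pminus H b := le_pm_of hab hmono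
  have h2 : pplus H a ≤ (b : EReal) := pp_le_coe hab hmono
  obtain ⟨c, hc, hac⟩ : ∃ c : ℝ, pplus H a = (c : EReal) ∧ a ≤ c :=
    pp_real (by intro htop; rw [htop] at h2; exact absurd (top_le_iff.1 h2) (EReal.coe_ne_top b))
  have hcb : c ≤ b := by rw [hc] at h2; exact_mod_cast h2
  have hxc : x ≤ c := by
    have := hxa.2
    rw [hc] at this
    exact_mod_cast this
  have hbx : pminus H b ≤ x := hxb.1
  have hbc : pminus H b ≤ c := le_trans hbx hxc
  rcases eq_or_lt_of_le h1 with heq | hlt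
  · -- a = b⁻
    rcases eq_or_lt_of_le hac with heq2 | hlt2
    · -- a = c; x = a and b⁻ = a < b, so H a = H b
      have hpmb : pminus H b < b := by rw [← heq]; exact hab
      have := H_pm_eq hH hcoer hpmb
      rw [← heq] at this
      linarith
    · -- a < c
      rcases eq_or_lt_of_le hcb with hceq | hclt
      · have := H_pp_eq hH hc hlt2
        rw [hceq] at this
        linarith
      · have h3 : H c < H b := H_lt_of_between_pm hcoer (by rw [← heq]; exact hlt2) hclt
        have h4 := H_pp_eq hH hc hlt2
        linarith
  · -- a < b⁻
    have hHpmb : H a ≤ H (pminus H b) := by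
      rcases eq_or_lt_of_le hbc with hbceq | hbclt
      · rw [hbceq]
        exact (H_pp_eq hH hc (by rw [← hbceq]; exact hlt)).ge
      · refine (H_lt_of_between_pp hlt ?_).le
        rw [hc]
        exact_mod_cast hbclt
    rcases lt_or_eq_of_le (pm_le hcoer b) with hlt2 | heq2
    · have := H_pm_eq hH hcoer hlt2
      linarith
    · -- b⁻ = b hence c = b and a < c, so H c = H a, i.e. H b = H a
      have hcb' : c = b := le_antisymm hcb (by rw [← heq2]; exact hbc)
      have := H_pp_eq hH hc (by rw [hcb']; exact hab)
      rw [hcb'] at this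
      linarith

lemma levels_eq (hH : Continuous H) (hcoer : Coercive H) (hA : IsSetLimiter H A)
    {a b x : ℝ} (ha : a ∈ A) (hb : b ∈ A)
    (hxa : x ∈ ccMM H a) (hxb : x ∈ ccMM H b) : H a = H b := by
  rcases lt_trichotomy a b with h | h | h
  · exact le_antisymm (levels_le hH hcoer hA ha hb h hxa hxb) (hA.2.1 a ha b hb h)
  · rw [h]
  · exact le_antisymm (hA.2.1 b hb a ha h) (levels_le hH hcoer hA hb ha h hxb hxa)

lemma limFlux_eq (hH : Continuous H) (hcoer : Coercive H) (hA : IsSetLimiter H A)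
    {a x : ℝ} (ha : a ∈ A) (hx : x ∈ ccMM H a) : limFlux H A x = H a := by
  have hex : ∃ b, b ∈ A ∧ x ∈ ccMM H b := ⟨a, ha, hx⟩
  rw [limFlux, dif_pos hex]
  exact levels_eq hH hcoer hA hex.choose_spec.1 ha hex.choose_spec.2 hx

lemma limFlux_self (hH : Continuous H) (hcoer : Coercive H) (hA : IsSetLimiter H A)
    {a : ℝ} (ha : a ∈ A) : limFlux H A a = H a :=
  limFlux_eq hH hcoer hA ha (mem_ccMM_self hcoer a)

lemma limFlux_of_not {x : ℝ} (h : ¬ ∃ b, b ∈ A ∧ x ∈ ccMM H b) :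
    limFlux H A x = H x := dif_neg h

/-- Hard lemma: `a ∈ A`, `q > a` with `H q > H a`, and `q` not covered by any
closed interval of `A` is impossible. -/
lemma hard (hH : Continuous H) (hcoer : Coercive H) (hA : IsSetLimiter H A)
    {a q : ℝ} (ha : a ∈ A) (haq : a < q) (hq : H a < H q)
    (hunc : ∀ b ∈ A, q ∉ ccMM H b) : False := by
  set S := {t : ℝ | t ∈ Icc a q ∧ H t ≤ H a} with hSdef
  have hSne : S.Nonempty := ⟨a, ⟨le_rfl, haq.le⟩, le_rfl⟩
  have hSbdd : BddAbove S := ⟨q, fun t ht => ht.1.2⟩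
  set p := sSup S with hpdef
  have hap : a ≤ p := le_csSup hSbdd ⟨⟨le_rfl, haq.le⟩, le_rfl⟩
  have hpq : p ≤ q := csSup_le hSne (fun t ht => ht.1.2)
  have hHp_le : H p ≤ H a :=
    closure_minimal (fun t ht => ht.2) (isClosed_le hH continuous_const)
      ((isLUB_csSup hSne hSbdd).mem_closure hSne)
  have hpq' : p < q := by
    rcases lt_or_eq_of_le hpq with h | h
    · exact h
    · rw [h] at hHp_le; linarith
  have key : ∀ t, p < t → t ≤ q → H a < H t := by
    intro t h1 h2
    by_contra hcon
    push_neg at hcon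
    exact absurd (le_csSup hSbdd ⟨⟨le_trans hap h1.le, h2⟩, hcon⟩) (not_le.2 h1)
  have hHpa : H p = H a := by
    refine le_antisymm hHp_le ?_
    have ht : Tendsto H (𝓝[>] p) (𝓝 (H p)) := (hH.tendsto p).mono_left nhdsWithin_le_nhds
    refine ge_of_tendsto ht ?_
    filter_upwards [Ioc_mem_nhdsGT_of_mem (⟨le_rfl, hpq'⟩ : p ∈ Ico p q)] with t ht'
    exact (key t ht'.1 ht'.2).le
  obtain ⟨δ, hδ, hball⟩ := Metric.isOpen_iff.mp (isOpen_lt continuous_const hH) q hq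
  have hqpp : (q : EReal) < pplus H p := by
    have hle : (↑(q + δ / 2) : EReal) ≤ pplus H p := by
      refine le_sInf ?_
      rintro y ⟨x, ⟨hx1, hx2⟩, rfl⟩
      rw [EReal.coe_le_coe_iff]
      by_contra hcon
      push_neg at hcon
      rcases le_or_gt x q with hxq | hxq
      · have := key x hx1 hxq
        rw [← hHpa] at this
        linarith
      · have hmem : x ∈ Metric.ball q δ := by
          rw [Metric.mem_ball, Real.dist_eq, abs_of_pos (by linarith)]
          linarith
        have : H a < H x := hball hmem
        rw [← hHpa] at this
        linarith
    refine lt_of_lt_of_le ?_ hle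
    exact_mod_cast (by linarith : q < q + δ / 2)
  obtain ⟨b, hb, s, hsUp, hsMM⟩ :=
    hA.2.2.2 p (lt_of_le_of_lt (by exact_mod_cast hpq) hqpp)
  have hsp : p < s := hsUp.1
  have hspp : (s : EReal) < pplus H p := hsUp.2
  have hbs : pminus H b < s := hsMM.1
  have hsb : (s : EReal) < pplus H b := hsMM.2
  rcases le_or_gt s q with hsq | hsq
  · -- s ≤ q
    have hHs : H a < H s := key s hsp hsq
    rcases lt_trichotomy b a with hba | hba | hba
    · -- b < a : a ∈ (b, b⁺), so H b < H a; but monotonicity gives H a ≤ H b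
      have h1 : H b < H a := by
        refine H_lt_of_between_pp hba ?_
        refine lt_trans ?_ hsb
        exact_mod_cast lt_of_le_of_lt hap hsp
      have h2 : H a ≤ H b := hA.2.1 b hb a ha hba
      linarith
    · -- b = a
      subst hba
      have h1 : pminus H b ≤ q := (pm_le hcoer b).trans haq.le
      have h2 : pplus H b < (q : EReal) := not_le.1 (fun h => hunc b hb ⟨h1, h⟩)
      obtain ⟨c, hc, _⟩ := pp_real ((h2.trans (EReal.coe_lt_top q)).ne)
      have hsc : s < c := by rw [hc] at hsb; exact_mod_cast hsb
      have hcq : c < q := by rw [hc] at h2; exact_mod_cast h2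
      have h3 := key c (hsp.trans hsc) hcq.le
      have h4 := H_pp_le hH hc
      linarith
    · -- a < b
      have hmono : H b ≤ H a := hA.2.1 a ha b hb hba
      rcases le_or_gt s b with hsb' | hsb'
      · rcases eq_or_lt_of_le hsb' with rfl | hslt
        · linarith
        · have := H_lt_of_between_pm hcoer hbs hslt
          linarith
      · have h1 : pminus H b ≤ q := hbs.le.trans hsq
        have h2 : pplus H b < (q : EReal) := not_le.1 (fun h => hunc b hb ⟨h1, h⟩)
        obtain ⟨c, hc, _⟩ := pp_real ((h2.trans (EReal.coe_lt_top q)).ne)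
        have hsc : s < c := by rw [hc] at hsb; exact_mod_cast hsb
        have hcq : c < q := by rw [hc] at h2; exact_mod_cast h2
        have h3 := key c (hsp.trans hsc) hcq.le
        have h4 := H_pp_le hH hc
        linarith
  · -- q < s
    have hbq : q < pminus H b := by
      by_contra hcon
      push_neg at hcon
      refine hunc b hb ⟨hcon, le_of_lt (lt_trans ?_ hsb)⟩
      exact_mod_cast hsq
    have hqb : q < b := lt_of_lt_of_le hbq (pm_le hcoer b)
    have hmono : H b ≤ H a := hA.2.1 a ha b hb (haq.trans hqb)
    rcases lt_or_ge s b with hsb' | hsb'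
    · have h1 : H s < H b := H_lt_of_between_pm hcoer hbs hsb'
      have h2 : H p < H s := H_lt_of_between_pp hsp hspp
      rw [hHpa] at h2
      linarith
    · have h1 : H p < H b := by
        refine H_lt_of_between_pp (hpq'.trans hqb) ?_
        exact lt_of_le_of_lt (by exact_mod_cast hsb') hspp
      rw [hHpa] at h1
      linarith

/-- Mirror hard lemma: `a ∈ A`, `q < a` with `H q < H a`, and `q` not covered
is impossible. -/
lemma hard' (hH : Continuous H) (hcoer : Coercive H) (hA : IsSetLimiter H A)
    {a q : ℝ} (ha : a ∈ A) (hqa : q < a) (hq : H q < H a)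
    (hunc : ∀ b ∈ A, q ∉ ccMM H b) : False := by
  set S := {t : ℝ | t ∈ Icc q a ∧ H a ≤ H t} with hSdef
  have hSne : S.Nonempty := ⟨a, ⟨hqa.le, le_rfl⟩, le_rfl⟩
  have hSbdd : BddBelow S := ⟨q, fun t ht => ht.1.1⟩
  set p := sInf S with hpdef
  have hpa : p ≤ a := csInf_le hSbdd ⟨⟨hqa.le, le_rfl⟩, le_rfl⟩
  have hqp : q ≤ p := le_csInf hSne (fun t ht => ht.1.1)
  have hHp_ge : H a ≤ H p :=
    closure_minimal (fun t ht => ht.2) (isClosed_le continuous_const hH)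
      ((isGLB_csInf hSne hSbdd).mem_closure hSne)
  have hqp' : q < p := by
    rcases lt_or_eq_of_le hqp with h | h
    · exact h
    · rw [← h] at hHp_ge; linarith
  have key : ∀ t, q ≤ t → t < p → H t < H a := by
    intro t h1 h2
    by_contra hcon
    push_neg at hcon
    exact absurd (csInf_le hSbdd ⟨⟨h1, h2.le.trans hpa⟩, hcon⟩) (not_le.2 h2)
  have hHpa : H p = H a := by
    refine le_antisymm ?_ hHp_ge
    have ht : Tendsto H (𝓝[<] p) (𝓝 (H p)) := (hH.tendsto p).mono_left nhdsWithin_le_nhds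
    refine le_of_tendsto ht ?_
    filter_upwards [Ico_mem_nhdsLT_of_mem (⟨hqp', le_rfl⟩ : p ∈ Ioc q p)] with t ht'
    exact (key t ht'.1 ht'.2).le
  obtain ⟨δ, hδ, hball⟩ := Metric.isOpen_iff.mp (isOpen_lt hH continuous_const) q hq
  have hpmq : pminus H p < q := by
    have hle : pminus H p ≤ q - δ / 2 := by
      refine csSup_le (pmSet_nonempty hcoer p) ?_
      rintro t ⟨ht1, ht2⟩
      rw [hHpa] at ht2
      by_contra hcon
      push_neg at hcon
      rcases le_or_gt q t with hqt | hqt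
      · have := key t hqt ht1
        linarith
      · have hmem : t ∈ Metric.ball q δ := by
          rw [Metric.mem_ball, Real.dist_eq, abs_of_neg (by linarith)]
          linarith
        have : H t < H a := hball hmem
        linarith
    linarith
  obtain ⟨b, hb, s, hsIoo, hsMM⟩ := hA.2.2.1 p (hpmq.trans hqp')
  have hps : pminus H p < s := hsIoo.1
  have hsp : s < p := hsIoo.2
  have hbs : pminus H b < s := hsMM.1
  have hsb : (s : EReal) < pplus H b := hsMM.2
  rcases lt_or_ge s q with hsq | hsq
  · -- s < q
    have h1 : pminus H b ≤ q := hbs.le.trans hsq.le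
    have h2 : pplus H b < (q : EReal) := not_le.1 (fun h => hunc b hb ⟨h1, h⟩)
    obtain ⟨c, hc, hbc⟩ := pp_real ((h2.trans (EReal.coe_lt_top q)).ne)
    have hsc : s < c := by rw [hc] at hsb; exact_mod_cast hsb
    have hcq : c < q := by rw [hc] at h2; exact_mod_cast h2
    have hba : b < a := lt_of_le_of_lt hbc (hcq.trans hqa)
    have hmono : H a ≤ H b := hA.2.1 b hb a ha hba
    have hHs : H s < H a := by
      have := H_lt_of_between_pm hcoer hps hsp
      rwa [hHpa] at this
    rcases le_or_gt b s with hbs' | hbs'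
    · rcases eq_or_lt_of_le hbs' with rfl | hlt
      · linarith
      · have := H_lt_of_between_pp hlt hsb
        linarith
    · -- s < b : b ∈ (p⁻, p), so H b < H a, contradiction with H a ≤ H b
      have hbp : b < p := lt_of_le_of_lt hbc (hcq.trans hqp')
      have := H_lt_of_between_pm hcoer (hps.trans hbs') hbp
      rw [hHpa] at this
      linarith
  · -- q ≤ s
    rcases eq_or_lt_of_le hsq with rfl | hqs
    · exact hunc b hb ⟨hbs.le, hsb.le⟩
    · have hHs : H s < H a := by
        have := H_lt_of_between_pm hcoer hps hsp
        rwa [hHpa] at this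
      rcases lt_trichotomy b a with hba | hba | hba
      · -- b < a
        have hmono : H a ≤ H b := hA.2.1 b hb a ha hba
        rcases le_or_gt b s with hbs' | hbs'
        · rcases eq_or_lt_of_le hbs' with rfl | hlt
          · linarith
          · have := H_lt_of_between_pp hlt hsb
            linarith
        · -- s < b : q < b⁻, and b⁻ ∈ (p⁻, p) gives H(b⁻) < H a ≤ H b ≤ H(b⁻)
          have hqpb : q < pminus H b := by
            by_contra hcon
            push_neg at hcon
            exact hunc b hb ⟨hcon, le_of_lt (lt_trans (by exact_mod_cast hqs) hsb)⟩
          have h3 : H (pminus H b) < H a := by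
            have := H_lt_of_between_pm hcoer (hpmq.trans hqpb) (hbs.trans hsp)
            rwa [hHpa] at this
          have h4 := le_H_pm hH hcoer b
          linarith
      · -- b = a
        subst hba
        have hqpb : q < pminus H b := by
          by_contra hcon
          push_neg at hcon
          exact hunc b hb ⟨hcon, le_of_lt (lt_trans (by exact_mod_cast hqs) hsb)⟩
        have h3 : H (pminus H b) < H b := by
          have := H_lt_of_between_pm hcoer (hpmq.trans hqpb) (hbs.trans hsp)
          rwa [hHpa] at this
        have h4 := le_H_pm hH hcoer b
        linarith
      · -- a < b
        have hmono : H b ≤ H a := hA.2.1 a ha b hb hba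
        have hab' : a ∈ Set.Ioo (pminus H b) b := ⟨lt_of_lt_of_le hbs (hsp.le.trans hpa), hba⟩
        have := H_lt_of_between_pm hcoer hab'.1 hab'.2
        linarith

/-- Direction 1, case (S): `a ∈ A` with `a⁻ < a` satisfies condition (S). -/
lemma memS (hH : Continuous H) (hcoer : Coercive H) (hA : IsSetLimiter H A)
    {a : ℝ} (ha : a ∈ A) (h2 : pminus H a < a) : CondS H (limFlux H A) a := by
  refine ⟨ne_of_lt h2, le_of_eq (limFlux_self hH hcoer hA ha).symm, ?_⟩
  rintro q hq ⟨r, hrMM, hrIoo⟩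
  have hr1 : pminus H q < r := hrMM.1
  have hr2 : (r : EReal) < pplus H q := hrMM.2
  have hr3 : pminus H a < r := hrIoo.1
  have hr4 : r < a := hrIoo.2
  have hHr : H r < H a := H_lt_of_between_pm hcoer hr3 hr4
  rcases le_or_gt q r with hqr | hqr
  · rcases eq_or_lt_of_le hqr with rfl | hlt
    · exact hHr.le
    · exact (lt_trans (H_lt_of_between_pp hlt hr2) hHr).le
  · rcases lt_trichotomy q a with hqa | hqa | hqa
    · exact (H_lt_of_between_pm hcoer (hr3.trans hqr) hqa).le
    · exact le_of_eq (by rw [hqa])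
    · -- a < q
      by_contra hcon
      push_neg at hcon
      by_cases hcov : ∃ b, b ∈ A ∧ q ∈ ccMM H b
      · obtain ⟨b, hb, hqb⟩ := hcov
        rw [limFlux_eq hH hcoer hA hb hqb] at hq
        rcases lt_trichotomy b a with hba | hba | hba
        · -- b < a : a ∈ (b, b⁺), H b < H a ≤ H b contradiction
          have h1 : H b < H a := by
            refine H_lt_of_between_pp hba (lt_of_lt_of_le ?_ hqb.2)
            exact_mod_cast hqa
          have h3 : H a ≤ H b := hA.2.1 b hb a ha hba
          linarith
        · rw [hba] at hq; linarith
        · have h3 : H b ≤ H a := hA.2.1 a ha b hb hba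
          linarith
      · push_neg at hcov
        exact hard hH hcoer hA ha hqa hcon hcov

/-- Direction 1, case (T): `a ∈ A` with `a < a⁺` satisfies condition (T). -/
lemma memT (hH : Continuous H) (hcoer : Coercive H) (hA : IsSetLimiter H A)
    {a : ℝ} (ha : a ∈ A) (h2 : (a : EReal) < pplus H a) : CondT H (limFlux H A) a := by
  refine ⟨ne_of_lt h2, le_of_eq (limFlux_self hH hcoer hA ha), ?_⟩
  rintro q hq ⟨r, hrMM, hrUp⟩
  have hr1 : pminus H q < r := hrMM.1
  have hr2 : (r : EReal) < pplus H q := hrMM.2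
  have hr3 : a < r := hrUp.1
  have hr4 : (r : EReal) < pplus H a := hrUp.2
  have hHr : H a < H r := H_lt_of_between_pp hr3 hr4
  rcases le_or_gt r q with hrq | hrq
  · rcases eq_or_lt_of_le hrq with rfl | hlt
    · exact hHr.le
    · exact (lt_trans hHr (H_lt_of_between_pm hcoer hr1 hlt)).le
  · rcases lt_trichotomy q a with hqa | hqa | hqa
    · -- q < a
      by_contra hcon
      push_neg at hcon
      by_cases hcov : ∃ b, b ∈ A ∧ q ∈ ccMM H b
      · obtain ⟨b, hb, hqb⟩ := hcov
        rw [limFlux_eq hH hcoer hA hb hqb] at hq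
        rcases lt_trichotomy b a with hba | hba | hba
        · have h3 : H a ≤ H b := hA.2.1 b hb a ha hba
          linarith
        · rw [hba] at hq; linarith
        · -- a < b : a ∈ (b⁻, b), H a < H b ≤ H a contradiction
          have h1 : H a < H b :=
            H_lt_of_between_pm hcoer (lt_of_le_of_lt hqb.1 hqa) hba
          have h3 : H b ≤ H a := hA.2.1 a ha b hb hba
          linarith
      · push_neg at hcov
        exact hard' hH hcoer hA ha hqa hcon hcov
    · exact le_of_eq (by rw [hqa])
    · -- a < q : q ∈ (a, a⁺)
      refine (H_lt_of_between_pp hqa (lt_trans ?_ hr4)).le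
      exact_mod_cast hrq

/-- Direction 2, case (S): condition (S) for `F = limFlux H A` forces membership in `A`. -/
lemma S_mem (hH : Continuous H) (hcoer : Coercive H) (hA : IsSetLimiter H A)
    {p : ℝ} (hp : CondS H (limFlux H A) p) : p ∈ A := by
  obtain ⟨hne, hle, hC⟩ := hp
  have hpm : pminus H p < p := lt_of_le_of_ne (pm_le hcoer p) hne
  obtain ⟨a, ha, r, hrIoo, hrMM⟩ := hA.2.2.1 p hpm
  have hHa : H a ≤ H p := by
    refine hC a ?_ ⟨r, hrMM, hrIoo⟩
    rw [limFlux_self hH hcoer hA ha]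
  rcases lt_trichotomy a p with hap | hap | hap
  swap
  · rwa [hap] at ha
  swap
  · -- p < a : p ∈ (a⁻, a), H p < H a ≤ H p
    have := H_lt_of_between_pm hcoer (hrMM.1.trans hrIoo.2) hap
    linarith
  · by_contra hpA
    by_cases hcov : ∃ b, b ∈ A ∧ p ∈ ccMM H b
    · obtain ⟨b, hb, hpb⟩ := hcov
      rw [limFlux_eq hH hcoer hA hb hpb] at hle
      have hbp : b ≠ p := fun h => hpA (h ▸ hb)
      rcases lt_or_gt_of_ne hbp with hblt | hbgt
      · -- b < p : then p = b⁺ (as EReal) and H p = H b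
        have hppb : (p : EReal) = pplus H b := by
          rcases eq_or_lt_of_le hpb.2 with h | h
          · exact h
          · have := H_lt_of_between_pp hblt h
            linarith
        have hHpb : H p = H b := H_pp_eq hH hppb.symm hblt
        have hbpm : b ≤ pminus H p := le_pm_of hblt (le_of_eq hHpb)
        -- r ∈ (b, b⁺) : H r > H b = H p ; and r ∈ (p⁻, p) : H r < H p
        have h1 : H b < H r := by
          refine H_lt_of_between_pp (lt_of_le_of_lt hbpm hrIoo.1) ?_
          rw [← hppb]
          exact_mod_cast hrIoo.2
        have h2 : H r < H p := H_lt_of_between_pm hcoer hrIoo.1 hrIoo.2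
        linarith
      · -- p < b : all levels equal, a ≤ p⁻, r ∈ (a, a⁺) gives contradiction
        have hmono : H b ≤ H a := hA.2.1 a ha b hb (hap.trans hbgt)
        have heq1 : H p = H a := le_antisymm (by linarith) hHa
        have hapm : a ≤ pminus H p := le_pm_of hap heq1.le
        have h1 : H a < H r := by
          refine H_lt_of_between_pp (lt_of_le_of_lt hapm hrIoo.1) hrMM.2
        have h2 : H r < H p := H_lt_of_between_pm hcoer hrIoo.1 hrIoo.2
        linarith
    · push_neg at hcov
      rcases eq_or_lt_of_le hHa with heq | hlt
      · -- H a = H p : a⁺ ≤ p with a⁺ < p since p not covered; r ∈ (a, a⁺)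
        have hapm : a ≤ pminus H p := le_pm_of hap heq.ge
        have h1 : H a < H r :=
          H_lt_of_between_pp (lt_of_le_of_lt hapm hrIoo.1) hrMM.2
        have h2 : H r < H p := H_lt_of_between_pm hcoer hrIoo.1 hrIoo.2
        rw [heq] at h1
        linarith
      · exact hard hH hcoer hA ha hap hlt hcov

/-- Direction 2, case (T). -/
lemma T_mem (hH : Continuous H) (hcoer : Coercive H) (hA : IsSetLimiter H A)
    {p : ℝ} (hp : CondT H (limFlux H A) p) : p ∈ A := by
  obtain ⟨hne, hle, hC⟩ := hp
  have hpp : (p : EReal) < pplus H p := lt_of_le_of_ne (le_pp H p) hne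
  obtain ⟨a, ha, r, hrUp, hrMM⟩ := hA.2.2.2 p hpp
  have hHa : H p ≤ H a := by
    refine hC a ?_ ⟨r, hrMM, hrUp⟩
    rw [limFlux_self hH hcoer hA ha]
  rcases lt_trichotomy a p with hap | hap | hap
  · -- a < p : p ∈ (a, a⁺) since p < r < a⁺, so H a < H p ≤ H a
    have h1 : H a < H p := by
      refine H_lt_of_between_pp hap (lt_of_lt_of_le ?_ hrMM.2.le)
      exact_mod_cast hrUp.1
    linarith
  · rwa [hap] at ha
  · by_contra hpA
    by_cases hcov : ∃ b, b ∈ A ∧ p ∈ ccMM H b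
    · obtain ⟨b, hb, hpb⟩ := hcov
      rw [limFlux_eq hH hcoer hA hb hpb] at hle
      have hbp : b ≠ p := fun h => hpA (h ▸ hb)
      rcases lt_or_gt_of_ne hbp with hblt | hbgt
      · -- b < p : levels all equal, p⁺ ≤ a, r ∈ (a⁻, a) contradiction
        have hmono : H a ≤ H b := hA.2.1 b hb a ha (hblt.trans hap)
        have heq1 : H p = H a := le_antisymm hHa (by linarith)
        have hppa : pplus H p ≤ (a : EReal) := pp_le_coe hap heq1.ge
        have hra : r < a := by
          have := lt_of_lt_of_le hrUp.2 hppa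
          exact_mod_cast this
        have h1 : H r < H a := H_lt_of_between_pm hcoer hrMM.1 hra
        have h2 : H p < H r := H_lt_of_between_pp hrUp.1 hrUp.2
        linarith
      · -- p < b : then p = b⁻ and H p = H b
        have hpbm : p = pminus H b := by
          rcases eq_or_lt_of_le hpb.1 with h | h
          · exact h.symm
          · have := H_lt_of_between_pm hcoer h hbgt
            linarith
        have hHpb : H p = H b := by
          have := H_pm_eq hH hcoer (p := b) (hpbm ▸ hbgt)
          rw [← hpbm] at this
          linarith
        have hppb : pplus H p ≤ (b : EReal) := pp_le_coe hbgt hHpb.ge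
        have hrb : r < b := by
          have := lt_of_lt_of_le hrUp.2 hppb
          exact_mod_cast this
        have h1 : H r < H b := H_lt_of_between_pm hcoer (hpbm ▸ hrUp.1) hrb
        have h2 : H p < H r := H_lt_of_between_pp hrUp.1 hrUp.2
        linarith
    · push_neg at hcov
      rcases eq_or_lt_of_le hHa with heq | hlt
      · -- H p = H a : p⁺ ≤ a, r ∈ (a⁻, a) contradiction
        have hppa : pplus H p ≤ (a : EReal) := pp_le_coe hap heq.ge
        have hra : r < a := by
          have := lt_of_lt_of_le hrUp.2 hppa
          exact_mod_cast this
        have h1 : H r < H a := H_lt_of_between_pm hcoer hrMM.1 hra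
        have h2 : H p < H r := H_lt_of_between_pp hrUp.1 hrUp.2
        rw [← heq] at h1
        linarith
      · exact hard' hH hcoer hA ha hap hlt hcov

end SLaux

theorem stmt7 (H : ℝ → ℝ) (hH : Continuous H) (hcoer : Coercive H)
    (A : Set ℝ) (hA : IsSetLimiter H A) :
    limiterOf H (limFlux H A) = A := by
  ext p
  constructor
  · rintro (h | h)
    · exact SLaux.S_mem hH hcoer hA h
    · exact SLaux.T_mem hH hcoer hA h
  · intro ha
    rcases lt_or_eq_of_le (SLaux.pm_le hcoer p) with h | h
    · exact Or.inl (SLaux.memS hH hcoer hA ha h)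
    · refine Or.inr (SLaux.memT hH hcoer hA ha ?_)
      have hne := hA.1 p ha
      rw [h] at hne
      exact lt_of_le_of_ne (SLaux.le_pp H p) hne
end
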